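/- For 0 ≤ k < n, the quotient Sₖ₊₁/Sₖ of normalized elementary symmetric polynomials is concave on the positive cone Γ₊ ⊂ ℝⁿ. -/

import Mathlib

noncomputable section

/-- The open positive cone in `ℝⁿ`. -/
def posCone (n : ℕ) : Set (Fin n → ℝ) := {x | ∀ i, 0 < x i}

/-- The normalized `k`-th elementary symmetric polynomial. -/
def eS (n k : ℕ) (x : Fin n → ℝ) : ℝ :=
  ((n.choose k : ℝ))⁻¹ * ∑ A ∈ Finset.powersetCard k (Finset.univ : Finset (Fin n)), ∏ i ∈ A, x i

set_option linter.unusedSectionVars false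

namespace MLaux
variable {ι : Type*} [DecidableEq ι]

/-- Unnormalized elementary symmetric function over an index set `s`. -/
def E (s : Finset ι) (k : ℕ) (x : ι → ℝ) : ℝ :=
  ∑ A ∈ s.powersetCard k, ∏ i ∈ A, x i

lemma E_zero (s : Finset ι) (x : ι → ℝ) : E s 0 x = 1 := by simp [E]

lemma E_one (s : Finset ι) (x : ι → ℝ) : E s 1 x = ∑ i ∈ s, x i := by
  simp [E, Finset.powersetCard_one]

lemma E_pos {s : Finset ι} {k : ℕ} {x : ι → ℝ} (hk : k ≤ s.card)
    (hx : ∀ i ∈ s, 0 < x i) : 0 < E s k x := by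
  apply Finset.sum_pos
  · intro A hA
    rw [Finset.mem_powersetCard] at hA
    exact Finset.prod_pos fun i hi => hx i (hA.1 hi)
  · exact (Finset.powersetCard_nonempty).mpr hk

lemma E_erase {s : Finset ι} {i : ι} (hi : i ∈ s) (k : ℕ) (x : ι → ℝ) :
    E s (k+1) x = E (s.erase i) (k+1) x + x i * E (s.erase i) k x := by
  classical
  have h1 : ∑ A ∈ (s.powersetCard (k+1)).filter (fun A => ¬ i ∈ A), ∏ j ∈ A, x j
      = E (s.erase i) (k+1) x := by
    rw [E]
    congr 1
    ext A
    simp only [Finset.mem_filter, Finset.mem_powersetCard, Finset.subset_erase]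
    tauto
  have h2 : ∑ A ∈ (s.powersetCard (k+1)).filter (fun A => i ∈ A), ∏ j ∈ A, x j
      = x i * E (s.erase i) k x := by
    rw [E, Finset.mul_sum]
    apply Finset.sum_nbij' (fun A => A.erase i) (fun B => insert i B)
    · intro A hA
      simp only [Finset.mem_filter, Finset.mem_powersetCard] at hA
      simp only [Finset.mem_powersetCard, Finset.subset_erase]
      refine ⟨⟨(Finset.erase_subset i A).trans hA.1.1, Finset.notMem_erase _ _⟩, ?_⟩
      rw [Finset.card_erase_of_mem hA.2, hA.1.2]
      omega
    · intro B hB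
      simp only [Finset.mem_powersetCard, Finset.subset_erase] at hB
      simp only [Finset.mem_filter, Finset.mem_powersetCard]
      refine ⟨⟨Finset.insert_subset hi hB.1.1, ?_⟩, Finset.mem_insert_self _ _⟩
      rw [Finset.card_insert_of_notMem hB.1.2, hB.2]
    · intro A hA
      simp only [Finset.mem_filter] at hA
      exact Finset.insert_erase hA.2
    · intro B hB
      simp only [Finset.mem_powersetCard, Finset.subset_erase] at hB
      exact Finset.erase_insert hB.1.2
    · intro A hA
      simp only [Finset.mem_filter] at hA
      exact (Finset.mul_prod_erase A x hA.2).symm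
  rw [E, ← Finset.sum_filter_add_sum_filter_not (s.powersetCard (k+1)) (fun A => i ∈ A), h1, h2]
  ring

lemma E_sum_erase (s : Finset ι) (k : ℕ) (x : ι → ℝ) :
    ∑ i ∈ s, x i * E (s.erase i) k x = ((k : ℝ) + 1) * E s (k+1) x := by
  classical
  have hR : ((k : ℝ) + 1) * E s (k+1) x
      = ∑ B ∈ s.powersetCard (k+1), ∑ i ∈ B, x i * ∏ j ∈ B.erase i, x j := by
    rw [E, Finset.mul_sum]
    apply Finset.sum_congr rfl
    intro B hB
    rw [Finset.mem_powersetCard] at hB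
    rw [Finset.sum_congr rfl (fun i hi => Finset.mul_prod_erase B x hi),
      Finset.sum_const, hB.2]
    push_cast
    ring
  rw [hR]
  simp only [E, Finset.mul_sum]
  rw [Finset.sum_sigma', Finset.sum_sigma']
  apply Finset.sum_nbij' (fun p => (⟨insert p.1 p.2, p.1⟩ : Σ _ : Finset ι, ι))
    (fun q => (⟨q.2, q.1.erase q.2⟩ : Σ _ : ι, Finset ι))
  · rintro ⟨i, A⟩ hp
    simp only [Finset.mem_sigma, Finset.mem_powersetCard, Finset.subset_erase] at hp ⊢
    refine ⟨⟨Finset.insert_subset hp.1 hp.2.1.1, ?_⟩, Finset.mem_insert_self _ _⟩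
    rw [Finset.card_insert_of_notMem hp.2.1.2, hp.2.2]
  · rintro ⟨B, i⟩ hq
    simp only [Finset.mem_sigma, Finset.mem_powersetCard, Finset.subset_erase] at hq ⊢
    refine ⟨hq.1.1 hq.2, ⟨(Finset.erase_subset _ _).trans hq.1.1, Finset.notMem_erase _ _⟩, ?_⟩
    rw [Finset.card_erase_of_mem hq.2, hq.1.2]
    omega
  · rintro ⟨i, A⟩ hp
    simp only [Finset.mem_sigma, Finset.mem_powersetCard, Finset.subset_erase] at hp
    simp only [Finset.erase_insert hp.2.1.2]
  · rintro ⟨B, i⟩ hq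
    simp only [Finset.mem_sigma] at hq
    simp only [Finset.insert_erase hq.2]
  · rintro ⟨i, A⟩ hp
    simp only [Finset.mem_sigma, Finset.mem_powersetCard, Finset.subset_erase] at hp
    simp only []
    rw [Finset.erase_insert hp.2.1.2]

lemma par_mono {u t T : ℝ} (hu : 0 < u) (ht : 0 < t) (hT : t ≤ T) :
    u * t / (t + u) ≤ u * T / (T + u) := by
  have hT0 : 0 < T := lt_of_lt_of_le ht hT
  rw [div_le_div_iff₀ (by positivity) (by positivity)]
  nlinarith [mul_le_mul_of_nonneg_left hT (mul_pos hu hu).le]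

lemma par_super {u v a b : ℝ} (hu : 0 < u) (hv : 0 < v) (ha : 0 < a) (hb : 0 < b) :
    u*a/(a+u) + v*b/(b+v) ≤ (u+v)*(a+b)/((a+b)+(u+v)) := by
  rw [div_add_div _ _ (by positivity) (by positivity),
    div_le_div_iff₀ (by positivity) (by positivity)]
  nlinarith [sq_nonneg (u*b - v*a)]

/-- The expansion `(k+2) E_{k+2}/E_{k+1} = ∑ᵢ wᵢ tᵢ/(tᵢ + wᵢ)` with
`tᵢ = E_{k+1}(ŵᵢ)/E_k(ŵᵢ)`. -/
lemma ratio_expand {s : Finset ι} {k : ℕ} (hcard : k + 2 ≤ s.card) {w : ι → ℝ}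
    (hw : ∀ i ∈ s, 0 < w i) :
    ((k : ℝ) + 2) * (E s (k+2) w / E s (k+1) w)
      = ∑ i ∈ s, (w i * (E (s.erase i) (k+1) w / E (s.erase i) k w)) /
          ((E (s.erase i) (k+1) w / E (s.erase i) k w) + w i) := by
  have hD : 0 < E s (k+1) w := E_pos (by omega) hw
  have hsum : ∑ i ∈ s, w i * E (s.erase i) (k+1) w = ((k : ℝ) + 2) * E s (k+2) w := by
    have := E_sum_erase s (k+1) w
    push_cast at this
    convert this using 2 <;> ring
  rw [mul_div_assoc', hsum.symm, Finset.sum_div]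
  apply Finset.sum_congr rfl
  intro i hi
  have hci : k + 1 ≤ (s.erase i).card := by
    rw [Finset.card_erase_of_mem hi]; omega
  have hwi : ∀ j ∈ s.erase i, 0 < w j := fun j hj => hw j (Finset.mem_of_mem_erase hj)
  have hp : 0 < E (s.erase i) (k+1) w := E_pos hci hwi
  have hq : 0 < E (s.erase i) k w := E_pos (by omega) hwi
  have hwi0 : 0 < w i := hw i hi
  have hden : 0 < E (s.erase i) (k+1) w + w i * E (s.erase i) k w := by positivity
  have hden2 : 0 < E (s.erase i) (k+1) w / E (s.erase i) k w + w i := by positivity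
  rw [E_erase hi k w]
  rw [div_eq_div_iff (by positivity) hden2.ne']
  field_simp

/-- Marcus–Lopes superadditivity of `E_{k+1}/E_k` on positive vectors. -/
lemma superadd : ∀ (k : ℕ) (s : Finset ι) (x y : ι → ℝ),
    (∀ i ∈ s, 0 < x i) → (∀ i ∈ s, 0 < y i) → k + 1 ≤ s.card →
    E s (k+1) x / E s k x + E s (k+1) y / E s k y
      ≤ E s (k+1) (x + y) / E s k (x + y) := by
  intro k
  induction k with
  | zero =>
    intro s x y hx hy hcard
    simp only [zero_add, E_zero, E_one, div_one, Pi.add_apply, Finset.sum_add_distrib, le_refl]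
  | succ k IH =>
    intro s x y hx hy hcard
    have hz : ∀ i ∈ s, 0 < (x + y) i := fun i hi => by
      have := hx i hi; have := hy i hi
      simp only [Pi.add_apply]; linarith
    have hk2 : (0:ℝ) < (k : ℝ) + 2 := by positivity
    rw [← mul_le_mul_iff_right₀ hk2, mul_add]
    rw [ratio_expand hcard hx, ratio_expand hcard hy, ratio_expand hcard hz,
      ← Finset.sum_add_distrib]
    apply Finset.sum_le_sum
    intro i hi
    have hci : k + 1 ≤ (s.erase i).card := by
      rw [Finset.card_erase_of_mem hi]; omega
    have hxi : ∀ j ∈ s.erase i, 0 < x j := fun j hj => hx j (Finset.mem_of_mem_erase hj)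
    have hyi : ∀ j ∈ s.erase i, 0 < y j := fun j hj => hy j (Finset.mem_of_mem_erase hj)
    set a := E (s.erase i) (k+1) x / E (s.erase i) k x with ha_def
    set b := E (s.erase i) (k+1) y / E (s.erase i) k y with hb_def
    set T := E (s.erase i) (k+1) (x+y) / E (s.erase i) k (x+y) with hT_def
    have ha : 0 < a := div_pos (E_pos hci hxi) (E_pos (by omega) hxi)
    have hb : 0 < b := div_pos (E_pos hci hyi) (E_pos (by omega) hyi)
    have hab : a + b ≤ T := IH (s.erase i) x y hxi hyi hci
    have hu : 0 < x i := hx i hi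
    have hv : 0 < y i := hy i hi
    have hzi : (x + y) i = x i + y i := rfl
    rw [hzi]
    calc x i * a / (a + x i) + y i * b / (b + y i)
        ≤ (x i + y i) * (a + b) / ((a + b) + (x i + y i)) := par_super hu hv ha hb
      _ ≤ (x i + y i) * T / (T + (x i + y i)) :=
          par_mono (by linarith) (by linarith) hab

lemma E_smul (s : Finset ι) (k : ℕ) (a : ℝ) (x : ι → ℝ) :
    E s k (a • x) = a ^ k * E s k x := by
  rw [E, E, Finset.mul_sum]
  apply Finset.sum_congr rfl
  intro A hA
  rw [Finset.mem_powersetCard] at hA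
  simp only [Pi.smul_apply, smul_eq_mul, Finset.prod_mul_distrib, Finset.prod_const, hA.2]

lemma ratio_smul (s : Finset ι) (k : ℕ) {a : ℝ} (ha : a ≠ 0) (x : ι → ℝ) :
    E s (k+1) (a • x) / E s k (a • x) = a * (E s (k+1) x / E s k x) := by
  rw [E_smul, E_smul]
  have h : a ^ (k+1) * E s (k+1) x = a ^ k * (a * E s (k+1) x) := by ring
  rw [h, mul_div_mul_left _ _ (pow_ne_zero k ha), mul_div_assoc]

end MLaux

open MLaux in
theorem stmt7 {n k : ℕ} (hk : k < n) :
    ConcaveOn ℝ (posCone n) (fun x => eS n (k + 1) x / eS n k x) := by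
  have hcard : (Finset.univ : Finset (Fin n)).card = n := by
    simp
  set C : ℝ := ((n.choose (k+1) : ℝ))⁻¹ * (n.choose k : ℝ) with hC_def
  have hC : 0 < C := by
    apply mul_pos
    · rw [inv_pos]
      exact_mod_cast Nat.choose_pos hk
    · exact_mod_cast Nat.choose_pos hk.le
  have key : ∀ w : Fin n → ℝ, eS n (k+1) w / eS n k w
      = C * (E Finset.univ (k+1) w / E Finset.univ k w) := by
    intro w
    show ((n.choose (k+1) : ℝ))⁻¹ * E Finset.univ (k+1) w /
        (((n.choose k : ℝ))⁻¹ * E Finset.univ k w) = _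
    rw [hC_def]
    have hck : ((n.choose k : ℝ)) ≠ 0 := by exact_mod_cast (Nat.choose_pos hk.le).ne'
    field_simp
  constructor
  · intro x hx y hy a b ha hb hab
    intro i
    simp only [Pi.add_apply, Pi.smul_apply, smul_eq_mul]
    rcases eq_or_lt_of_le ha with h | h
    · have hb1 : b = 1 := by linarith
      rw [← h, hb1]
      simpa using hy i
    · have h1 : 0 < a * x i := mul_pos h (hx i)
      have h2 : 0 ≤ b * y i := mul_nonneg hb (hy i).le
      linarith
  · intro x hx y hy a b ha hb hab
    simp only [smul_eq_mul]
    rcases eq_or_lt_of_le ha with h | ha'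
    · have hb1 : b = 1 := by linarith
      rw [← h, hb1]
      simp
    rcases eq_or_lt_of_le hb with h | hb'
    · have ha1 : a = 1 := by linarith
      rw [← h, ha1]
      simp
    have hax : ∀ i ∈ (Finset.univ : Finset (Fin n)), 0 < (a • x) i := by
      intro i _
      exact mul_pos ha' (hx i)
    have hby : ∀ i ∈ (Finset.univ : Finset (Fin n)), 0 < (b • y) i := by
      intro i _
      exact mul_pos hb' (hy i)
    have hsup := superadd k Finset.univ (a • x) (b • y) hax hby (by omega)
    rw [ratio_smul _ _ ha'.ne' x, ratio_smul _ _ hb'.ne' y] at hsup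
    rw [key, key, key]
    calc a * (C * (E Finset.univ (k+1) x / E Finset.univ k x))
          + b * (C * (E Finset.univ (k+1) y / E Finset.univ k y))
        = C * (a * (E Finset.univ (k+1) x / E Finset.univ k x)
            + b * (E Finset.univ (k+1) y / E Finset.univ k y)) := by ring
      _ ≤ C * (E Finset.univ (k+1) (a • x + b • y) / E Finset.univ k (a • x + b • y)) :=
          mul_le_mul_of_nonneg_left hsup hC.le
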